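/- Key operator bound in the proof of the quadrature estimate (5.30) for gradient terms: let E be a 3-dimensional real inner product space and B a linear endomorphism of E with ‖Bᵀ B − id‖ ≤ ε for some 0 ≤ ε ≤ 1/2, where Bᵀ is the adjoint. Then B is invertible and ‖ |det B| · (B⁻¹ ∘ B⁻ᵀ) − id ‖ ≤ 8 ε, where B⁻ᵀ denotes the adjoint of B⁻¹. -/

import Mathlib

lemma mul_shuffle' {M : Type*} [Monoid M] (p q r s : M) :
    (p * q) * (r * s) = p * ((q * r) * s) := by
  simp only [mul_assoc]

lemma det_eq_prod_eigs {E : Type*} [NormedAddCommGroup E] [InnerProductSpace ℝ E]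
    [FiniteDimensional ℝ E] {n : ℕ} (hn : Module.finrank ℝ E = n)
    {T : E →ₗ[ℝ] E} (hT : T.IsSymmetric) :
    T.det = ∏ i, hT.eigenvalues hn i := by
  classical
  set b := hT.eigenvectorBasis hn
  rw [← LinearMap.det_toMatrix b.toBasis]
  have : LinearMap.toMatrix b.toBasis b.toBasis T = Matrix.diagonal (hT.eigenvalues hn) := by
    ext i j
    rw [LinearMap.toMatrix_apply]
    have hbj : T (b j) = hT.eigenvalues hn j • b j := hT.apply_eigenvectorBasis hn j
    simp only [OrthonormalBasis.coe_toBasis, hbj, map_smul,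
      Module.Basis.repr_self]
    by_cases hij : i = j <;>
      simp [hij, Matrix.diagonal, Finsupp.single_apply, OrthonormalBasis.repr_self]
  rw [this, Matrix.det_diagonal]


set_option maxHeartbeats 1000000 in

/-- Key operator bound in the proof of the quadrature estimate (5.30) for gradient
terms: if `E` is a 3-dimensional real inner product space and `B` is an
endomorphism with `‖Bᵀ B − id‖ ≤ ε` for some `0 ≤ ε ≤ 1/2`, then `B` is invertible
and `‖ |det B| · (B⁻¹ ∘ B⁻ᵀ) − id ‖ ≤ 8 ε`, where `B⁻ᵀ` is the adjoint of `B⁻¹`. -/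
theorem transfer_op_gradient_quadrature_bound
    {E : Type*} [NormedAddCommGroup E] [InnerProductSpace ℝ E] [FiniteDimensional ℝ E]
    (hdim : Module.finrank ℝ E = 3)
    (B : E →L[ℝ] E) (ε : ℝ) (hε0 : 0 ≤ ε) (hε1 : ε ≤ 1/2)
    (h : ‖(ContinuousLinearMap.adjoint B).comp B - ContinuousLinearMap.id ℝ E‖ ≤ ε) :
    ∃ Binv : E →L[ℝ] E,
      Binv.comp B = ContinuousLinearMap.id ℝ E ∧
      B.comp Binv = ContinuousLinearMap.id ℝ E ∧
      ‖|LinearMap.det (B : E →ₗ[ℝ] E)| •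
            (Binv.comp (ContinuousLinearMap.adjoint Binv))
          - ContinuousLinearMap.id ℝ E‖ ≤ 8 * ε := by
  classical
  set A : E →L[ℝ] E := (ContinuousLinearMap.adjoint B).comp B with hAdef
  have hid : (ContinuousLinearMap.id ℝ E : E →L[ℝ] E) = 1 := rfl
  have hA1 : ‖A - 1‖ ≤ ε := by rw [← hid]; exact h
  have h1A : ‖1 - A‖ ≤ ε := by rw [← neg_sub, norm_neg]; exact hA1
  have hlt : ‖1 - A‖ < 1 := lt_of_le_of_lt h1A (by linarith)
  set u : (E →L[ℝ] E)ˣ := Units.oneSub (1 - A) hlt with hu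
  have huval : (u : E →L[ℝ] E) = A := sub_sub_cancel 1 A
  set Binv : E →L[ℝ] E := (↑u⁻¹ : E →L[ℝ] E) * ContinuousLinearMap.adjoint B with hBinv
  have hleft : Binv * B = 1 := by
    rw [hBinv, mul_assoc]
    have hAB : ContinuousLinearMap.adjoint B * B = A := rfl
    rw [hAB, ← huval, u.inv_mul]
  have hleft' : Binv.comp B = ContinuousLinearMap.id ℝ E := hleft
  have hright : B * Binv = 1 := by
    have h1 : (Binv : E →ₗ[ℝ] E) * (B : E →ₗ[ℝ] E) = 1 := by
      ext x
      have := ContinuousLinearMap.ext_iff.mp hleft x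
      simpa using this
    have h2 : (B : E →ₗ[ℝ] E) * (Binv : E →ₗ[ℝ] E) = 1 := mul_eq_one_comm.mp h1
    ext x
    have := LinearMap.ext_iff.mp h2 x
    simpa using this
  have hright' : B.comp Binv = ContinuousLinearMap.id ℝ E := hright
  -- Binv ∘ Binvᵀ = u⁻¹
  have key : ContinuousLinearMap.adjoint Binv * ContinuousLinearMap.adjoint B = 1 := by
    have h' := ContinuousLinearMap.adjoint_comp B Binv
    rw [hright', ContinuousLinearMap.adjoint_id] at h'
    exact h'.symm
  have hadj : Binv * ContinuousLinearMap.adjoint Binv = (↑u⁻¹ : E →L[ℝ] E) := by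
    set a := ContinuousLinearMap.adjoint Binv with ha
    have h3 : (Binv * a) * A = 1 := by
      have hAB : A = ContinuousLinearMap.adjoint B * B := rfl
      calc (Binv * a) * A = (Binv * a) * (ContinuousLinearMap.adjoint B * B) := by rw [hAB]
        _ = Binv * ((a * ContinuousLinearMap.adjoint B) * B) :=
            mul_shuffle' Binv a (ContinuousLinearMap.adjoint B) B
        _ = Binv * B := by rw [key, one_mul]
        _ = 1 := hleft
    calc Binv * a = (Binv * a) * (↑u * ↑u⁻¹) := by rw [u.mul_inv, mul_one]
      _ = (Binv * a) * (A * ↑u⁻¹) := by rw [huval]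
      _ = ((Binv * a) * A) * ↑u⁻¹ := (mul_assoc (Binv * a) A (↑u⁻¹ : E →L[ℝ] E)).symm
      _ = ↑u⁻¹ := by rw [h3, one_mul]
  -- norm bound on u⁻¹
  have hinv_norm : ‖(↑u⁻¹ : E →L[ℝ] E)‖ ≤ 2 := by
    apply ContinuousLinearMap.opNorm_le_bound _ (by norm_num)
    intro x
    set y := (↑u⁻¹ : E →L[ℝ] E) x with hy
    have hAy : A y = x := by
      have : (↑u * ↑u⁻¹ : E →L[ℝ] E) x = x := by rw [u.mul_inv]; rfl
      rwa [huval] at this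
    have h4 : ‖y - A y‖ ≤ ε * ‖y‖ := by
      have hyy : y - A y = (1 - A) y := by simp [ContinuousLinearMap.sub_apply]
      rw [hyy]
      calc ‖(1 - A) y‖ ≤ ‖1 - A‖ * ‖y‖ := (1 - A).le_opNorm y
        _ ≤ ε * ‖y‖ := by gcongr
    have h6 : ‖y‖ ≤ ε * ‖y‖ + ‖x‖ := by
      calc ‖y‖ = ‖(y - A y) + A y‖ := by rw [sub_add_cancel]
        _ ≤ ‖y - A y‖ + ‖A y‖ := norm_add_le _ _
        _ = ‖y - A y‖ + ‖x‖ := by rw [hAy]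
        _ ≤ ε * ‖y‖ + ‖x‖ := by linarith
    nlinarith [norm_nonneg y, norm_nonneg x,
      mul_nonneg (by linarith : (0:ℝ) ≤ 1/2 - ε) (norm_nonneg y)]
  have hinv1 : ‖(↑u⁻¹ : E →L[ℝ] E) - 1‖ ≤ 2 * ε := by
    have hh : (↑u⁻¹ : E →L[ℝ] E) - 1 = (↑u⁻¹ : E →L[ℝ] E) * (1 - A) := by
      rw [mul_sub, mul_one, ← huval, u.inv_mul]
    rw [hh]
    calc ‖(↑u⁻¹ : E →L[ℝ] E) * (1 - A)‖ ≤ ‖(↑u⁻¹ : E →L[ℝ] E)‖ * ‖1 - A‖ := norm_mul_le _ _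
      _ ≤ 2 * ε := mul_le_mul hinv_norm h1A (norm_nonneg _) (by norm_num)
  -- determinant part
  have hTsymm : ((A : E →ₗ[ℝ] E)).IsSymmetric := by
    intro x y
    simp only [hAdef, ContinuousLinearMap.coe_comp, LinearMap.coe_comp, Function.comp_apply,
      ContinuousLinearMap.coe_coe]
    rw [ContinuousLinearMap.adjoint_inner_left, ContinuousLinearMap.adjoint_inner_right]
  set μ := hTsymm.eigenvalues hdim with hμ
  have heig : ∀ i, |μ i - 1| ≤ ε := by
    intro i
    set v := hTsymm.eigenvectorBasis hdim i with hv
    have hvnorm : ‖v‖ = 1 := (hTsymm.eigenvectorBasis hdim).orthonormal.1 i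
    have happ : A v = μ i • v := hTsymm.apply_eigenvectorBasis hdim i
    have hsub : (A - 1) v = (μ i - 1) • v := by
      simp [ContinuousLinearMap.sub_apply, happ, sub_smul]
    have hb := (A - 1).le_opNorm v
    rw [hsub, norm_smul, hvnorm, Real.norm_eq_abs, mul_one, mul_one] at hb
    exact hb.trans hA1
  have hprodl : (1 - ε)^3 ≤ ∏ i, μ i := by
    have hpp : ∏ _i : Fin 3, (1 - ε) ≤ ∏ i, μ i := by
      apply Finset.prod_le_prod
      · intro i _; linarith
      · intro i _; have := abs_le.mp (heig i); linarith [this.1]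
    simpa using hpp
  have hprodu : ∏ i, μ i ≤ (1 + ε)^3 := by
    have hpp : ∏ i, μ i ≤ ∏ _i : Fin 3, (1 + ε) := by
      apply Finset.prod_le_prod
      · intro i _; have := abs_le.mp (heig i); linarith [this.1]
      · intro i _; have := abs_le.mp (heig i); linarith [this.2]
    simpa using hpp
  have hdet_prod : LinearMap.det (A : E →ₗ[ℝ] E) = ∏ i, μ i := det_eq_prod_eigs hdim hTsymm
  have hdet_sq : LinearMap.det (A : E →ₗ[ℝ] E) = (LinearMap.det (B : E →ₗ[ℝ] E))^2 := by
    have hcoe : (A : E →ₗ[ℝ] E)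
        = (LinearMap.adjoint (B : E →ₗ[ℝ] E)).comp (B : E →ₗ[ℝ] E) := by
      ext x
      simp only [hAdef, ContinuousLinearMap.coe_comp, LinearMap.coe_comp, Function.comp_apply,
        ContinuousLinearMap.coe_coe]
      apply ext_inner_left ℝ
      intro y
      rw [ContinuousLinearMap.adjoint_inner_right, LinearMap.adjoint_inner_right]
      rfl
    rw [hcoe, LinearMap.det_comp]
    let b0 := stdOrthonormalBasis ℝ E
    have hdet_adj : LinearMap.det (LinearMap.adjoint (B : E →ₗ[ℝ] E))
        = LinearMap.det (B : E →ₗ[ℝ] E) := by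
      rw [← LinearMap.det_toMatrix b0.toBasis, LinearMap.toMatrix_adjoint,
        Matrix.det_conjTranspose, star_trivial, LinearMap.det_toMatrix]
    rw [hdet_adj]; ring
  set d : ℝ := |LinearMap.det (B : E →ₗ[ℝ] E)| with hd
  have hdsq : d^2 = ∏ i, μ i := by rw [hd, sq_abs, ← hdet_sq, hdet_prod]
  have hd0 : 0 ≤ d := abs_nonneg _
  have hup : d ≤ 1 + 2 * ε := by
    nlinarith [hdsq, hprodu, hd0, hε0, hε1, sq_nonneg (d - 1 - 2*ε), sq_nonneg (d + 1 + 2*ε),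
      mul_nonneg hε0 hε0, mul_nonneg (mul_nonneg hε0 hε0) hε0]
  have hlo : 1 - 2 * ε ≤ d := by
    rcases le_or_gt (1 - 2*ε) 0 with hc | hc
    · linarith
    · nlinarith [hdsq, hprodl, hd0, hε0, hε1, mul_nonneg hε0 hε0,
        mul_nonneg (mul_nonneg hε0 hε0) hε0]
  have hd_near : |d - 1| ≤ 2 * ε := by
    rw [abs_le]; constructor <;> linarith
  -- conclude
  refine ⟨Binv, hleft', hright', ?_⟩
  have hcompmul : Binv.comp (ContinuousLinearMap.adjoint Binv)
      = Binv * ContinuousLinearMap.adjoint Binv := rfl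
  rw [hid, hcompmul, hadj]
  have hsplit : d • (↑u⁻¹ : E →L[ℝ] E) - 1
      = (d - 1) • (↑u⁻¹ : E →L[ℝ] E) + ((↑u⁻¹ : E →L[ℝ] E) - 1) := by
    rw [sub_smul, one_smul]; abel
  rw [hsplit]
  calc ‖(d - 1) • (↑u⁻¹ : E →L[ℝ] E) + ((↑u⁻¹ : E →L[ℝ] E) - 1)‖
      ≤ ‖(d - 1) • (↑u⁻¹ : E →L[ℝ] E)‖ + ‖(↑u⁻¹ : E →L[ℝ] E) - 1‖ := norm_add_le _ _
    _ ≤ |d - 1| * ‖(↑u⁻¹ : E →L[ℝ] E)‖ + 2 * ε := by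
        refine add_le_add ?_ hinv1
        calc ‖(d - 1) • (↑u⁻¹ : E →L[ℝ] E)‖
            ≤ ‖(d - 1)‖ * ‖(↑u⁻¹ : E →L[ℝ] E)‖ := ContinuousLinearMap.opNorm_smul_le _ _
          _ = |d - 1| * ‖(↑u⁻¹ : E →L[ℝ] E)‖ := by rw [Real.norm_eq_abs]
    _ ≤ (2 * ε) * 2 + 2 * ε := by
        nlinarith [hinv_norm, hinv1, abs_nonneg (d - 1), norm_nonneg ((↑u⁻¹ : E →L[ℝ] E))]
    _ ≤ 8 * ε := by linarith
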